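/- Fix N ≥ 1 and complex constants R^{ij}_{kl}, g^{ij}, g̃_{ij}, f^{ij}_k, f̃^i_{jk} satisfying (gs): g^{ik} g̃_{jk} = δ^i_j = g^{ki} g̃_{kj}; (fs): g^{ni} f^{lm}_n g̃_{lj} g̃_{mk} = f̃^i_{jk} = g^{in} f^{lm}_n g̃_{jl} g̃_{km}; and (rg): R^{ij}_{kl} g^{km} g^{ln} = g^{jl} g^{ik} R^{mn}_{kl}. Then the algebra A_{Rgf} admits a Hopf algebra structure: there exist a ℂ-algebra homomorphism Δ : A_{Rgf} → A_{Rgf}⊗A_{Rgf} with Δ(t^i_j) = t^i_k ⊗ t^k_j, a ℂ-algebra homomorphism ε : A_{Rgf} → ℂ with ε(t^i_j) = δ^i_j, and a ℂ-linear algebra anti-homomorphism S : A_{Rgf} → A_{Rgf} with S(t^i_j) = g^{li} t^k_l g̃_{kj}, such that (Δ⊗id)∘Δ = (id⊗Δ)∘Δ, (ε⊗id)∘Δ = id = (id⊗ε)∘Δ (under the canonical identifications), and m∘(S⊗id)∘Δ = u∘ε = m∘(id⊗S)∘Δ, where m is the multiplication and u : ℂ → A_{Rgf} the unit map. -/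

import Mathlib

open TensorProduct

/-- The defining relations of the FRT-type algebra `A_{Rgf}`:
(RTT), (TTG), (TGC), (TTF) and (TFC), on the free algebra on the generators `t^i_j`. -/
inductive ARgfRel (N : ℕ) (R : Fin N → Fin N → Fin N → Fin N → ℂ)
    (g gt : Fin N → Fin N → ℂ) (f ft : Fin N → Fin N → Fin N → ℂ) :
    FreeAlgebra ℂ (Fin N × Fin N) → FreeAlgebra ℂ (Fin N × Fin N) → Prop
  | rtt (i j m n : Fin N) : ARgfRel N R g gt f ft
      (∑ k, ∑ l, R i j k l • (FreeAlgebra.ι ℂ (k, m) * FreeAlgebra.ι ℂ (l, n)))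
      (∑ k, ∑ l, R k l m n • (FreeAlgebra.ι ℂ (j, l) * FreeAlgebra.ι ℂ (i, k)))
  | ttg (i j : Fin N) : ARgfRel N R g gt f ft
      (algebraMap ℂ _ (g i j))
      (∑ k, ∑ l, g k l • (FreeAlgebra.ι ℂ (j, l) * FreeAlgebra.ι ℂ (i, k)))
  | tgc (m n : Fin N) : ARgfRel N R g gt f ft
      (∑ k, ∑ l, gt k l • (FreeAlgebra.ι ℂ (k, m) * FreeAlgebra.ι ℂ (l, n)))
      (algebraMap ℂ _ (gt m n))
  | ttf (i j m : Fin N) : ARgfRel N R g gt f ft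
      (∑ k, f i j k • FreeAlgebra.ι ℂ (k, m))
      (∑ k, ∑ l, f k l m • (FreeAlgebra.ι ℂ (j, l) * FreeAlgebra.ι ℂ (i, k)))
  | tfc (j m n : Fin N) : ARgfRel N R g gt f ft
      (∑ k, ∑ l, ft j k l • (FreeAlgebra.ι ℂ (k, m) * FreeAlgebra.ι ℂ (l, n)))
      (∑ l, ft l m n • FreeAlgebra.ι ℂ (j, l))

/-- The FRT-type algebra `A_{Rgf}`: the quotient of the free algebra on the `t^i_j`
by the relations above. -/
abbrev ARgf (N : ℕ) (R : Fin N → Fin N → Fin N → Fin N → ℂ)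
    (g gt : Fin N → Fin N → ℂ) (f ft : Fin N → Fin N → Fin N → ℂ) : Type :=
  RingQuot (ARgfRel N R g gt f ft)

/-- The generator `t^i_j` of `A_{Rgf}`. -/
noncomputable def tgen (N : ℕ) (R : Fin N → Fin N → Fin N → Fin N → ℂ)
    (g gt : Fin N → Fin N → ℂ) (f ft : Fin N → Fin N → Fin N → ℂ) (i j : Fin N) :
    ARgf N R g gt f ft :=
  RingQuot.mkAlgHom ℂ (ARgfRel N R g gt f ft) (FreeAlgebra.ι ℂ (i, j))



section FRTAux

variable {N : ℕ}

/-- `u` satisfies the five FRT-type relations in `B`. -/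
structure FRTSats (R : Fin N → Fin N → Fin N → Fin N → ℂ)
    (g gt : Fin N → Fin N → ℂ) (f ft : Fin N → Fin N → Fin N → ℂ)
    {B : Type*} [Semiring B] [Algebra ℂ B] (u : Fin N → Fin N → B) : Prop where
  rtt : ∀ i j m n, ∑ k, ∑ l, R i j k l • (u k m * u l n)
      = ∑ k, ∑ l, R k l m n • (u j l * u i k)
  ttg : ∀ i j, algebraMap ℂ B (g i j) = ∑ k, ∑ l, g k l • (u j l * u i k)
  tgc : ∀ m n, ∑ k, ∑ l, gt k l • (u k m * u l n) = algebraMap ℂ B (gt m n)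
  ttf : ∀ i j m, ∑ k, f i j k • u k m = ∑ k, ∑ l, f k l m • (u j l * u i k)
  tfc : ∀ j m n, ∑ k, ∑ l, ft j k l • (u k m * u l n) = ∑ l, ft l m n • u j l

variable {B : Type*} [Semiring B] [Algebra ℂ B]

lemma mul_algebraMap' (x : B) (c : ℂ) : x * algebraMap ℂ B c = c • x := by
  rw [← Algebra.commutes, ← Algebra.smul_def]

/-- matrices -/
def TMat (u : Fin N → Fin N → B) : Matrix (Fin N) (Fin N) B := Matrix.of u

def XMat (u : Fin N → Fin N → B) : Matrix (Fin N × Fin N) (Fin N × Fin N) B :=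
  Matrix.of fun p q => u p.1 q.1 * u p.2 q.2

def YMat (u : Fin N → Fin N → B) : Matrix (Fin N × Fin N) (Fin N × Fin N) B :=
  Matrix.of fun p q => u p.2 q.2 * u p.1 q.1

def RMat (R : Fin N → Fin N → Fin N → Fin N → ℂ) :
    Matrix (Fin N × Fin N) (Fin N × Fin N) B :=
  Matrix.of fun p q => algebraMap ℂ B (R p.1 p.2 q.1 q.2)

def GMat (g : Fin N → Fin N → ℂ) : Matrix (Fin N × Fin N) Unit B :=
  Matrix.of fun p _ => algebraMap ℂ B (g p.1 p.2)

def GtMat (gt : Fin N → Fin N → ℂ) : Matrix Unit (Fin N × Fin N) B :=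
  Matrix.of fun _ p => algebraMap ℂ B (gt p.1 p.2)

def FMat (f : Fin N → Fin N → Fin N → ℂ) : Matrix (Fin N × Fin N) (Fin N) B :=
  Matrix.of fun p k => algebraMap ℂ B (f p.1 p.2 k)

def FtMat (ft : Fin N → Fin N → Fin N → ℂ) : Matrix (Fin N) (Fin N × Fin N) B :=
  Matrix.of fun j p => algebraMap ℂ B (ft j p.1 p.2)

variable {R : Fin N → Fin N → Fin N → Fin N → ℂ}
  {g gt : Fin N → Fin N → ℂ} {f ft : Fin N → Fin N → Fin N → ℂ}
  {u : Fin N → Fin N → B}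

/-- the matrix form of the five relations -/
structure FRTMats (R : Fin N → Fin N → Fin N → Fin N → ℂ)
    (g gt : Fin N → Fin N → ℂ) (f ft : Fin N → Fin N → Fin N → ℂ)
    {B : Type*} [Semiring B] [Algebra ℂ B] (u : Fin N → Fin N → B) : Prop where
  rtt : (RMat R : Matrix _ _ B) * XMat u = YMat u * (RMat R : Matrix _ _ B)
  ttg : YMat u * (GMat g : Matrix _ _ B) = (GMat g : Matrix _ _ B)
  tgc : (GtMat gt : Matrix _ _ B) * XMat u = (GtMat gt : Matrix _ _ B)
  ttf : (FMat f : Matrix _ _ B) * TMat u = YMat u * (FMat f : Matrix _ _ B)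
  tfc : (FtMat ft : Matrix _ _ B) * XMat u = TMat u * (FtMat ft : Matrix _ _ B)

lemma frtMats_iff : FRTMats R g gt f ft u ↔ FRTSats R g gt f ft u := by
  have e1 : ∀ (M M' : Matrix (Fin N × Fin N) (Fin N × Fin N) B), M = M' ↔
      ∀ i j m n, M (i, j) (m, n) = M' (i, j) (m, n) := by
    intro M M'
    constructor
    · intro h i j m n; rw [h]
    · intro h; ext ⟨i, j⟩ ⟨m, n⟩; exact h i j m n
  constructor
  · rintro ⟨h1, h2, h3, h4, h5⟩
    constructor
    · intro i j m n
      have := congrFun (congrFun h1 (i, j)) (m, n)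
      simpa [Matrix.mul_apply, Fintype.sum_prod_type, RMat, XMat, YMat,
        ← Algebra.smul_def, mul_algebraMap'] using this
    · intro i j
      have := congrFun (congrFun h2 (i, j)) ()
      simpa [Matrix.mul_apply, Fintype.sum_prod_type, GMat, YMat,
        mul_algebraMap'] using this.symm
    · intro m n
      have := congrFun (congrFun h3 ()) (m, n)
      simpa [Matrix.mul_apply, Fintype.sum_prod_type, GtMat, XMat,
        ← Algebra.smul_def] using this
    · intro i j m
      have := congrFun (congrFun h4 (i, j)) m
      simpa [Matrix.mul_apply, Fintype.sum_prod_type, FMat, TMat, YMat,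
        ← Algebra.smul_def, mul_algebraMap'] using this
    · intro j m n
      have := congrFun (congrFun h5 j) (m, n)
      simpa [Matrix.mul_apply, Fintype.sum_prod_type, FtMat, TMat, XMat,
        ← Algebra.smul_def, mul_algebraMap'] using this
  · rintro ⟨h1, h2, h3, h4, h5⟩
    refine ⟨?_, ?_, ?_, ?_, ?_⟩
    · ext ⟨i, j⟩ ⟨m, n⟩
      simpa [Matrix.mul_apply, Fintype.sum_prod_type, RMat, XMat, YMat,
        ← Algebra.smul_def, mul_algebraMap'] using h1 i j m n
    · ext ⟨i, j⟩ ⟨⟩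
      simpa [Matrix.mul_apply, Fintype.sum_prod_type, GMat, YMat,
        mul_algebraMap'] using (h2 i j).symm
    · ext ⟨⟩ ⟨m, n⟩
      simpa [Matrix.mul_apply, Fintype.sum_prod_type, GtMat, XMat,
        ← Algebra.smul_def] using h3 m n
    · ext ⟨i, j⟩ m
      simpa [Matrix.mul_apply, Fintype.sum_prod_type, FMat, TMat, YMat,
        ← Algebra.smul_def, mul_algebraMap'] using h4 i j m
    · ext j ⟨m, n⟩
      simpa [Matrix.mul_apply, Fintype.sum_prod_type, FtMat, TMat, XMat,
        ← Algebra.smul_def, mul_algebraMap'] using h5 j m n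

end FRTAux

section P2
variable {N : ℕ} {B : Type*} [Semiring B] [Algebra ℂ B]

lemma collapse2 (p s q r : Fin N → B) (e1 e2 : Prop) [Decidable e1] [Decidable e2]
    (h1 : ∑ l, q l * r l = if e1 then (1 : B) else 0)
    (h2 : ∑ k, p k * s k = if e2 then (1 : B) else 0) :
    ∑ k, ∑ l, (p k * q l) * (r l * s k) = if e1 ∧ e2 then (1 : B) else 0 := by
  have step : ∀ k, ∑ l, (p k * q l) * (r l * s k)
      = p k * ((if e1 then (1 : B) else 0) * s k) := by
    intro k
    calc ∑ l, (p k * q l) * (r l * s k) = ∑ l, p k * ((q l * r l) * s k) := by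
          simp only [mul_assoc]
      _ = p k * ((∑ l, q l * r l) * s k) := by rw [← Finset.mul_sum, ← Finset.sum_mul]
      _ = _ := by rw [h1]
  simp only [step]
  by_cases he : e1
  · simp only [he, if_true, one_mul, true_and, h2]
  · simp [he]

lemma collapse2' (p s q r : Fin N → B) (e1 e2 : Prop) [Decidable e1] [Decidable e2]
    (h1 : ∑ l, q l * r l = if e1 then (1 : B) else 0)
    (h2 : ∑ k, p k * s k = if e2 then (1 : B) else 0) :
    ∑ k, ∑ l, (q l * p k) * (s k * r l) = if e1 ∧ e2 then (1 : B) else 0 := by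
  rw [Finset.sum_comm]
  have step : ∀ l, ∑ k, (q l * p k) * (s k * r l)
      = q l * ((if e2 then (1 : B) else 0) * r l) := by
    intro l
    calc ∑ k, (q l * p k) * (s k * r l) = ∑ k, q l * ((p k * s k) * r l) := by
          simp only [mul_assoc]
      _ = q l * ((∑ k, p k * s k) * r l) := by rw [← Finset.mul_sum, ← Finset.sum_mul]
      _ = _ := by rw [h2]
  simp only [step]
  by_cases he : e2
  · simp only [he, if_true, one_mul, and_true, h1]
  · simp [he]

section Inv
variable {u v : Fin N → Fin N → B}
variable (huv : ∀ i j, ∑ k, u i k * v k j = if i = j then (1 : B) else 0)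
variable (hvu : ∀ i j, ∑ k, v i k * u k j = if i = j then (1 : B) else 0)

include huv hvu

lemma TMat_mul_TMat : TMat u * TMat v = 1 := by
  ext i j
  simp only [Matrix.mul_apply, TMat, Matrix.of_apply, Matrix.one_apply]
  exact huv i j

lemma XMat_mul_YMat : XMat u * YMat v = 1 := by
  ext ⟨i, j⟩ ⟨m, n⟩
  simp only [Matrix.mul_apply, XMat, YMat, Matrix.of_apply, Matrix.one_apply,
    Fintype.sum_prod_type]
  rw [collapse2 (fun k => u i k) (fun k => v k m) (fun l => u j l) (fun l => v l n)
    (j = n) (i = m) (huv j n) (huv i m)]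
  simp [Prod.ext_iff, and_comm]

lemma YMat_mul_XMat : YMat u * XMat v = 1 := by
  ext ⟨i, j⟩ ⟨m, n⟩
  simp only [Matrix.mul_apply, XMat, YMat, Matrix.of_apply, Matrix.one_apply,
    Fintype.sum_prod_type]
  rw [collapse2' (fun k => u i k) (fun k => v k m) (fun l => u j l) (fun l => v l n)
    (j = n) (i = m) (huv j n) (huv i m)]
  simp [Prod.ext_iff, and_comm]

end Inv

/-- The matrix relations for the candidate antipode generators. -/
lemma frtMats_inv {R : Fin N → Fin N → Fin N → Fin N → ℂ}
    {g gt : Fin N → Fin N → ℂ} {f ft : Fin N → Fin N → Fin N → ℂ}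
    {u v : Fin N → Fin N → B}
    (hu : FRTMats R g gt f ft u)
    (huv : ∀ i j, ∑ k, u i k * v k j = if i = j then (1 : B) else 0)
    (hvu : ∀ i j, ∑ k, v i k * u k j = if i = j then (1 : B) else 0) :
    ((RMat R : Matrix _ _ B) * YMat v = XMat v * (RMat R : Matrix _ _ B))
    ∧ (XMat v * (GMat g : Matrix _ _ B) = (GMat g : Matrix _ _ B))
    ∧ ((GtMat gt : Matrix _ _ B) * YMat v = (GtMat gt : Matrix _ _ B))
    ∧ ((FMat f : Matrix _ _ B) * TMat v = XMat v * (FMat f : Matrix _ _ B))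
    ∧ ((FtMat ft : Matrix _ _ B) * YMat v = TMat v * (FtMat ft : Matrix _ _ B)) := by
  have hXY : XMat u * YMat v = 1 := XMat_mul_YMat huv hvu
  have hXY' : XMat v * YMat u = 1 := XMat_mul_YMat hvu huv
  have hTT : TMat u * TMat v = 1 := TMat_mul_TMat huv hvu
  have hTT' : TMat v * TMat u = 1 := TMat_mul_TMat hvu huv
  refine ⟨?_, ?_, ?_, ?_, ?_⟩
  · have eqA : (RMat R : Matrix _ _ B) = YMat u * (RMat R : Matrix _ _ B) * YMat v := by
      have h := congrArg (· * YMat v) hu.rtt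
      rw [Matrix.mul_assoc (RMat R), hXY, Matrix.mul_one] at h
      exact h
    conv_rhs => rw [eqA]
    rw [← Matrix.mul_assoc, ← Matrix.mul_assoc, hXY', Matrix.one_mul]
  · conv_lhs => rw [← hu.ttg]
    rw [← Matrix.mul_assoc, hXY', Matrix.one_mul]
  · conv_lhs => rw [← hu.tgc]
    rw [Matrix.mul_assoc, hXY, Matrix.mul_one]
  · have eqB : (FMat f : Matrix _ _ B) = YMat u * (FMat f : Matrix _ _ B) * TMat v := by
      have h := congrArg (· * TMat v) hu.ttf
      rw [Matrix.mul_assoc (FMat f), hTT, Matrix.mul_one] at h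
      exact h
    conv_rhs => rw [eqB]
    rw [← Matrix.mul_assoc, ← Matrix.mul_assoc, hXY', Matrix.one_mul]
  · have eqC : (FtMat ft : Matrix _ _ B) = TMat u * (FtMat ft : Matrix _ _ B) * YMat v := by
      have h := congrArg (· * YMat v) hu.tfc
      rw [Matrix.mul_assoc (FtMat ft), hXY, Matrix.mul_one] at h
      exact h
    conv_rhs => rw [eqC]
    rw [← Matrix.mul_assoc, ← Matrix.mul_assoc, hTT', Matrix.one_mul]

/-- matrix relations for products of two commuting copies -/
lemma frtMats_mul {R : Fin N → Fin N → Fin N → Fin N → ℂ}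
    {g gt : Fin N → Fin N → ℂ} {f ft : Fin N → Fin N → Fin N → ℂ}
    {u v : Fin N → Fin N → B}
    (hu : FRTMats R g gt f ft u) (hv : FRTMats R g gt f ft v)
    (hcomm : ∀ i j k l, u i j * v k l = v k l * u i j) :
    FRTMats R g gt f ft (fun i j => ∑ k, u i k * v k j) := by
  set w : Fin N → Fin N → B := fun i j => ∑ k, u i k * v k j with hw
  have hT : TMat w = TMat u * TMat v := by
    ext i j; simp [TMat, Matrix.mul_apply, hw]
  have hX : XMat w = XMat u * XMat v := by
    ext ⟨i, j⟩ ⟨m, n⟩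
    simp only [XMat, Matrix.of_apply, Matrix.mul_apply, Fintype.sum_prod_type, hw]
    rw [Finset.sum_mul_sum]
    refine Finset.sum_congr rfl fun k _ => Finset.sum_congr rfl fun l _ => ?_
    calc u i k * v k m * (u j l * v l n) = u i k * (v k m * u j l * v l n) := by
          simp only [mul_assoc]
      _ = u i k * (u j l * v k m * v l n) := by rw [hcomm j l k m]
      _ = u i k * u j l * (v k m * v l n) := by simp only [mul_assoc]
  have hY : YMat w = YMat u * YMat v := by
    ext ⟨i, j⟩ ⟨m, n⟩
    simp only [YMat, Matrix.of_apply, Matrix.mul_apply, Fintype.sum_prod_type, hw]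
    rw [Finset.sum_mul_sum, Finset.sum_comm]
    refine Finset.sum_congr rfl fun k _ => Finset.sum_congr rfl fun l _ => ?_
    calc u j l * v l n * (u i k * v k m) = u j l * (v l n * u i k * v k m) := by
          simp only [mul_assoc]
      _ = u j l * (u i k * v l n * v k m) := by rw [hcomm i k l n]
      _ = u j l * u i k * (v l n * v k m) := by simp only [mul_assoc]
  refine ⟨?_, ?_, ?_, ?_, ?_⟩
  · rw [hX, hY, ← Matrix.mul_assoc, hu.rtt, Matrix.mul_assoc, hv.rtt, Matrix.mul_assoc]
  · rw [hY, Matrix.mul_assoc, hv.ttg, hu.ttg]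
  · rw [hX, ← Matrix.mul_assoc, hu.tgc, hv.tgc]
  · rw [hT, hY, ← Matrix.mul_assoc, hu.ttf, Matrix.mul_assoc, hv.ttf, Matrix.mul_assoc]
  · rw [hX, hT, ← Matrix.mul_assoc, hu.tfc, Matrix.mul_assoc, hv.tfc, Matrix.mul_assoc]

end P2
section P3
variable {N : ℕ} {R : Fin N → Fin N → Fin N → Fin N → ℂ}
  {g gt : Fin N → Fin N → ℂ} {f ft : Fin N → Fin N → Fin N → ℂ}

/-- The generators of `A_{Rgf}` satisfy the relations. -/
lemma frtSats_tgen : FRTSats R g gt f ft (tgen N R g gt f ft) := by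
  constructor
  · intro i j m n
    have h := RingQuot.mkAlgHom_rel ℂ (ARgfRel.rtt (R := R) (g := g) (gt := gt)
      (f := f) (ft := ft) i j m n)
    simpa only [map_sum, map_smul, map_mul, tgen] using h
  · intro i j
    have h := RingQuot.mkAlgHom_rel ℂ (ARgfRel.ttg (R := R) (g := g) (gt := gt)
      (f := f) (ft := ft) i j)
    simpa only [map_sum, map_smul, map_mul, AlgHom.commutes, tgen] using h
  · intro m n
    have h := RingQuot.mkAlgHom_rel ℂ (ARgfRel.tgc (R := R) (g := g) (gt := gt)
      (f := f) (ft := ft) m n)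
    simpa only [map_sum, map_smul, map_mul, AlgHom.commutes, tgen] using h
  · intro i j m
    have h := RingQuot.mkAlgHom_rel ℂ (ARgfRel.ttf (R := R) (g := g) (gt := gt)
      (f := f) (ft := ft) i j m)
    simpa only [map_sum, map_smul, map_mul, tgen] using h
  · intro j m n
    have h := RingQuot.mkAlgHom_rel ℂ (ARgfRel.tfc (R := R) (g := g) (gt := gt)
      (f := f) (ft := ft) j m n)
    simpa only [map_sum, map_smul, map_mul, tgen] using h

variable {B : Type} [Semiring B] [Algebra ℂ B]

lemma frtSats_lift_resp {u : Fin N → Fin N → B} (hu : FRTSats R g gt f ft u) :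
    ∀ ⦃x y : FreeAlgebra ℂ (Fin N × Fin N)⦄, ARgfRel N R g gt f ft x y →
      (FreeAlgebra.lift ℂ (fun p : Fin N × Fin N => u p.1 p.2)) x
        = (FreeAlgebra.lift ℂ (fun p : Fin N × Fin N => u p.1 p.2)) y := by
  intro x y h
  induction h with
  | rtt i j m n =>
    simpa only [map_sum, map_smul, map_mul, FreeAlgebra.lift_ι_apply] using hu.rtt i j m n
  | ttg i j =>
    simpa only [map_sum, map_smul, map_mul, AlgHom.commutes, FreeAlgebra.lift_ι_apply] using
      hu.ttg i j
  | tgc m n =>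
    simpa only [map_sum, map_smul, map_mul, AlgHom.commutes, FreeAlgebra.lift_ι_apply] using
      hu.tgc m n
  | ttf i j m =>
    simpa only [map_sum, map_smul, map_mul, FreeAlgebra.lift_ι_apply] using hu.ttf i j m
  | tfc j m n =>
    simpa only [map_sum, map_smul, map_mul, FreeAlgebra.lift_ι_apply] using hu.tfc j m n

/-- lift an `FRTSats` family to an algebra hom on `A_{Rgf}` -/
noncomputable def frtLift {u : Fin N → Fin N → B} (hu : FRTSats R g gt f ft u) :
    ARgf N R g gt f ft →ₐ[ℂ] B :=
  RingQuot.liftAlgHom ℂ ⟨FreeAlgebra.lift ℂ (fun p : Fin N × Fin N => u p.1 p.2),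
    frtSats_lift_resp hu⟩

@[simp] lemma frtLift_tgen {u : Fin N → Fin N → B} (hu : FRTSats R g gt f ft u)
    (i j : Fin N) : frtLift hu (tgen N R g gt f ft i j) = u i j := by
  rw [tgen, frtLift, RingQuot.liftAlgHom_mkAlgHom_apply, FreeAlgebra.lift_ι_apply]

lemma frtSats_map {C : Type} [Semiring C] [Algebra ℂ C] (φ : B →ₐ[ℂ] C)
    {u : Fin N → Fin N → B} (hu : FRTSats R g gt f ft u) :
    FRTSats R g gt f ft (fun i j => φ (u i j)) := by
  constructor
  · intro i j m n
    simpa only [map_sum, map_smul, map_mul] using congrArg φ (hu.rtt i j m n)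
  · intro i j
    simpa only [map_sum, map_smul, map_mul, AlgHom.commutes] using congrArg φ (hu.ttg i j)
  · intro m n
    simpa only [map_sum, map_smul, map_mul, AlgHom.commutes] using congrArg φ (hu.tgc m n)
  · intro i j m
    simpa only [map_sum, map_smul, map_mul] using congrArg φ (hu.ttf i j m)
  · intro j m n
    simpa only [map_sum, map_smul, map_mul] using congrArg φ (hu.tfc j m n)

end P3
section P4
variable {N : ℕ} {R : Fin N → Fin N → Fin N → Fin N → ℂ}
  {g gt : Fin N → Fin N → ℂ} {f ft : Fin N → Fin N → Fin N → ℂ}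

open MulOpposite in
lemma op_sum' {M : Type*} [AddCommMonoid M] {ι : Type*} (s : Finset ι) (h : ι → M) :
    op (∑ i ∈ s, h i) = ∑ i ∈ s, op (h i) :=
  map_sum (opAddEquiv : M ≃+ Mᵐᵒᵖ) h s

open MulOpposite in
lemma unop_sum' {M : Type*} [AddCommMonoid M] {ι : Type*} (s : Finset ι) (h : ι → Mᵐᵒᵖ) :
    unop (∑ i ∈ s, h i) = ∑ i ∈ s, unop (h i) :=
  map_sum (opAddEquiv.symm : Mᵐᵒᵖ ≃+ M) h s

/-- the candidate antipode values on generators -/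
noncomputable def sgen (N : ℕ) (R : Fin N → Fin N → Fin N → Fin N → ℂ)
    (g gt : Fin N → Fin N → ℂ) (f ft : Fin N → Fin N → Fin N → ℂ) (i j : Fin N) :
    ARgf N R g gt f ft :=
  ∑ k, ∑ l, (g l i * gt k j) • tgen N R g gt f ft k l

lemma sgen_mul_tgen
    (hgs2 : ∀ i j : Fin N, ∑ k, g k i * gt k j = if i = j then (1 : ℂ) else 0)
    (i j : Fin N) :
    ∑ k, sgen N R g gt f ft i k * tgen N R g gt f ft k j
      = if i = j then (1 : ARgf N R g gt f ft) else 0 := by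
  set t := tgen N R g gt f ft with ht
  calc ∑ k, sgen N R g gt f ft i k * t k j
      = ∑ k, ∑ p, ∑ q, (g q i * gt p k) • (t p q * t k j) := by
        simp only [sgen, Finset.sum_mul, smul_mul_assoc, ht]
    _ = ∑ p, ∑ q, ∑ k, (g q i * gt p k) • (t p q * t k j) := by
        rw [Finset.sum_comm]
        exact Finset.sum_congr rfl fun p _ => Finset.sum_comm
    _ = ∑ q, ∑ p, ∑ k, (g q i * gt p k) • (t p q * t k j) := Finset.sum_comm
    _ = ∑ q, g q i • (∑ p, ∑ k, gt p k • (t p q * t k j)) := by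
        simp only [mul_smul, Finset.smul_sum]
    _ = ∑ q, g q i • (algebraMap ℂ (ARgf N R g gt f ft) (gt q j)) := by
        refine Finset.sum_congr rfl fun q _ => ?_
        rw [(frtSats_tgen (R := R)).tgc q j]
    _ = algebraMap ℂ (ARgf N R g gt f ft) (∑ q, g q i * gt q j) := by
        simp only [Algebra.smul_def, ← map_mul, ← map_sum]
    _ = if i = j then (1 : ARgf N R g gt f ft) else 0 := by
        rw [hgs2 i j, apply_ite (algebraMap ℂ (ARgf N R g gt f ft)), map_one, map_zero]

lemma tgen_mul_sgen
    (hgs2 : ∀ i j : Fin N, ∑ k, g k i * gt k j = if i = j then (1 : ℂ) else 0)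
    (i j : Fin N) :
    ∑ k, tgen N R g gt f ft i k * sgen N R g gt f ft k j
      = if i = j then (1 : ARgf N R g gt f ft) else 0 := by
  set t := tgen N R g gt f ft with ht
  calc ∑ k, t i k * sgen N R g gt f ft k j
      = ∑ k, ∑ p, ∑ q, (gt p j * g q k) • (t i k * t p q) := by
        simp only [sgen, Finset.mul_sum, mul_smul_comm, ht, mul_comm]
    _ = ∑ p, ∑ k, ∑ q, (gt p j * g q k) • (t i k * t p q) := Finset.sum_comm
    _ = ∑ p, gt p j • (∑ k, ∑ q, g q k • (t i k * t p q)) := by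
        simp only [mul_smul, Finset.smul_sum]
    _ = ∑ p, gt p j • (algebraMap ℂ (ARgf N R g gt f ft) (g p i)) := by
        refine Finset.sum_congr rfl fun p _ => ?_
        rw [Finset.sum_comm]
        rw [← (frtSats_tgen (R := R)).ttg p i]
    _ = algebraMap ℂ (ARgf N R g gt f ft) (∑ p, g p i * gt p j) := by
        simp only [Algebra.smul_def, ← map_mul, ← map_sum, mul_comm]
    _ = if i = j then (1 : ARgf N R g gt f ft) else 0 := by
        rw [hgs2 i j, apply_ite (algebraMap ℂ (ARgf N R g gt f ft)), map_one, map_zero]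

/-- the generators of the antipode, in the opposite algebra, satisfy the relations -/
lemma frtSats_op
    (hgs2 : ∀ i j : Fin N, ∑ k, g k i * gt k j = if i = j then (1 : ℂ) else 0) :
    FRTSats R g gt f ft (fun i j => MulOpposite.op (sgen N R g gt f ft i j)) := by
  obtain ⟨M1, M2, M3, M4, M5⟩ := frtMats_inv (frtMats_iff.2 (frtSats_tgen (R := R)))
    (tgen_mul_sgen hgs2) (sgen_mul_tgen hgs2)
  set s := sgen N R g gt f ft with hs
  constructor
  · intro i j m n
    apply MulOpposite.unop_injective
    have h := congrFun (congrFun M1 (i, j)) (m, n)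
    simp only [Matrix.mul_apply, Fintype.sum_prod_type, RMat, XMat, YMat,
      Matrix.of_apply, ← Algebra.smul_def, mul_algebraMap'] at h
    simpa only [unop_sum', MulOpposite.unop_smul, MulOpposite.unop_mul,
      MulOpposite.unop_op] using h
  · intro i j
    apply MulOpposite.unop_injective
    have h := congrFun (congrFun M2 (i, j)) ()
    simp only [Matrix.mul_apply, Fintype.sum_prod_type, GMat, XMat,
      Matrix.of_apply, mul_algebraMap'] at h
    simpa only [unop_sum', MulOpposite.unop_smul, MulOpposite.unop_mul,
      MulOpposite.unop_op, MulOpposite.algebraMap_apply] using h.symm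
  · intro m n
    apply MulOpposite.unop_injective
    have h := congrFun (congrFun M3 ()) (m, n)
    simp only [Matrix.mul_apply, Fintype.sum_prod_type, GtMat, YMat,
      Matrix.of_apply, ← Algebra.smul_def] at h
    simpa only [unop_sum', MulOpposite.unop_smul, MulOpposite.unop_mul,
      MulOpposite.unop_op, MulOpposite.algebraMap_apply] using h
  · intro i j m
    apply MulOpposite.unop_injective
    have h := congrFun (congrFun M4 (i, j)) m
    simp only [Matrix.mul_apply, Fintype.sum_prod_type, FMat, TMat, XMat,
      Matrix.of_apply, ← Algebra.smul_def, mul_algebraMap'] at h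
    simpa only [unop_sum', MulOpposite.unop_smul, MulOpposite.unop_mul,
      MulOpposite.unop_op] using h
  · intro j m n
    apply MulOpposite.unop_injective
    have h := congrFun (congrFun M5 j) (m, n)
    simp only [Matrix.mul_apply, Fintype.sum_prod_type, FtMat, TMat, YMat,
      Matrix.of_apply, ← Algebra.smul_def, mul_algebraMap'] at h
    simpa only [unop_sum', MulOpposite.unop_smul, MulOpposite.unop_mul,
      MulOpposite.unop_op] using h

/-- the counit generators satisfy the relations -/
lemma frtSats_eps :
    FRTSats R g gt f ft (fun i j => if i = j then (1 : ℂ) else 0) := by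
  constructor
  · intro i j m n
    simp [smul_eq_mul, mul_ite, ite_mul, Finset.sum_ite_eq, Finset.sum_ite_eq']
  · intro i j
    simp [smul_eq_mul, mul_ite, ite_mul, Finset.sum_ite_eq, Finset.sum_ite_eq',
      Algebra.algebraMap_self]
  · intro m n
    simp [smul_eq_mul, mul_ite, ite_mul, Finset.sum_ite_eq, Finset.sum_ite_eq',
      Algebra.algebraMap_self]
  · intro i j m
    simp [smul_eq_mul, mul_ite, ite_mul, Finset.sum_ite_eq, Finset.sum_ite_eq']
  · intro j m n
    simp [smul_eq_mul, mul_ite, ite_mul, Finset.sum_ite_eq, Finset.sum_ite_eq']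

/-- the coproduct generators satisfy the relations -/
lemma frtSats_delta :
    FRTSats R g gt f ft
      (fun i j => ∑ k, tgen N R g gt f ft i k ⊗ₜ[ℂ] tgen N R g gt f ft k j) := by
  have hL : FRTSats R g gt f ft
      (fun i j => tgen N R g gt f ft i j ⊗ₜ[ℂ] (1 : ARgf N R g gt f ft)) := by
    have h := frtSats_map (Algebra.TensorProduct.includeLeft :
      ARgf N R g gt f ft →ₐ[ℂ] ARgf N R g gt f ft ⊗[ℂ] ARgf N R g gt f ft)
      (frtSats_tgen (R := R))
    simpa only [Algebra.TensorProduct.includeLeft_apply] using h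
  have hR : FRTSats R g gt f ft
      (fun i j => (1 : ARgf N R g gt f ft) ⊗ₜ[ℂ] tgen N R g gt f ft i j) := by
    have h := frtSats_map (Algebra.TensorProduct.includeRight :
      ARgf N R g gt f ft →ₐ[ℂ] ARgf N R g gt f ft ⊗[ℂ] ARgf N R g gt f ft)
      (frtSats_tgen (R := R))
    simpa only [Algebra.TensorProduct.includeRight_apply] using h
  have key := frtMats_mul (frtMats_iff.2 hL) (frtMats_iff.2 hR) (fun i j k l => by
    simp only [Algebra.TensorProduct.tmul_mul_tmul, one_mul, mul_one])
  have hthis := frtMats_iff.1 key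
  have hfun : (fun i j => ∑ k,
        (tgen N R g gt f ft i k ⊗ₜ[ℂ] (1 : ARgf N R g gt f ft))
          * ((1 : ARgf N R g gt f ft) ⊗ₜ[ℂ] tgen N R g gt f ft k j))
      = fun i j => ∑ k, tgen N R g gt f ft i k ⊗ₜ[ℂ] tgen N R g gt f ft k j := by
    funext i j
    refine Finset.sum_congr rfl fun k _ => ?_
    simp only [Algebra.TensorProduct.tmul_mul_tmul, one_mul, mul_one]
  rw [← hfun]
  exact hthis

end P4
section P5

section ConvHelper
variable {A : Type} [Semiring A] [Algebra ℂ A]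

noncomputable def convG (S : A →ₗ[ℂ] A) : A ⊗[ℂ] A →ₗ[ℂ] A →ₗ[ℂ] A :=
  TensorProduct.lift (LinearMap.mk₂ ℂ
    (fun b1 b2 => (LinearMap.mulRight ℂ b2).comp (LinearMap.mulLeft ℂ (S b1)))
    (by intro m m' n; ext c; simp [map_add, add_mul])
    (by intro c m n; ext x; simp [map_smul, smul_mul_assoc])
    (by intro m n n'; ext c; simp [mul_add])
    (by intro c m n; ext x; simp [mul_smul_comm]))

@[simp] lemma convG_tmul (S : A →ₗ[ℂ] A) (b1 b2 c : A) :
    convG S (b1 ⊗ₜ[ℂ] b2) c = S b1 * c * b2 := by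
  simp [convG, TensorProduct.lift.tmul]

noncomputable def convG2 (S : A →ₗ[ℂ] A) : A ⊗[ℂ] A →ₗ[ℂ] A →ₗ[ℂ] A :=
  TensorProduct.lift (LinearMap.mk₂ ℂ
    (fun a1 a2 => (LinearMap.mulRight ℂ (S a2)).comp (LinearMap.mulLeft ℂ a1))
    (by intro m m' n; ext c; simp [add_mul])
    (by intro c m n; ext x; simp [smul_mul_assoc])
    (by intro m n n'; ext c; simp [map_add, mul_add])
    (by intro c m n; ext x; simp [map_smul, mul_smul_comm]))

@[simp] lemma convG2_tmul (S : A →ₗ[ℂ] A) (a1 a2 c : A) :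
    convG2 S (a1 ⊗ₜ[ℂ] a2) c = a1 * c * S a2 := by
  simp [convG2, TensorProduct.lift.tmul]

lemma convG_mul (S : A →ₗ[ℂ] A) (hSmul : ∀ a b : A, S (a * b) = S b * S a)
    (x y : A ⊗[ℂ] A) :
    (LinearMap.mul' ℂ A) ((TensorProduct.map S LinearMap.id) (x * y))
      = convG S y ((LinearMap.mul' ℂ A) ((TensorProduct.map S LinearMap.id) x)) := by
  induction x using TensorProduct.induction_on with
  | zero => simp
  | tmul a1 a2 =>
    induction y using TensorProduct.induction_on with
    | zero => simp
    | tmul b1 b2 =>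
      simp only [Algebra.TensorProduct.tmul_mul_tmul, TensorProduct.map_tmul,
        LinearMap.mul'_apply, LinearMap.id_coe, id_eq, convG_tmul, hSmul]
      simp [mul_assoc]
    | add y1 y2 h1 h2 =>
      simp only [mul_add, map_add, LinearMap.add_apply, h1, h2]
  | add x1 x2 h1 h2 =>
    simp only [add_mul, map_add, LinearMap.add_apply, h1, h2]

lemma convG_one (S : A →ₗ[ℂ] A) (y : A ⊗[ℂ] A) :
    convG S y 1 = (LinearMap.mul' ℂ A) ((TensorProduct.map S LinearMap.id) y) := by
  induction y using TensorProduct.induction_on with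
  | zero => simp
  | tmul b1 b2 =>
    simp only [convG_tmul, TensorProduct.map_tmul, LinearMap.mul'_apply, LinearMap.id_coe,
      id_eq, mul_one]
  | add y1 y2 h1 h2 => simp only [map_add, LinearMap.add_apply, h1, h2]

lemma convG2_mul (S : A →ₗ[ℂ] A) (hSmul : ∀ a b : A, S (a * b) = S b * S a)
    (x y : A ⊗[ℂ] A) :
    (LinearMap.mul' ℂ A) ((TensorProduct.map LinearMap.id S) (x * y))
      = convG2 S x ((LinearMap.mul' ℂ A) ((TensorProduct.map LinearMap.id S) y)) := by
  induction x using TensorProduct.induction_on with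
  | zero => simp
  | tmul a1 a2 =>
    induction y using TensorProduct.induction_on with
    | zero => simp
    | tmul b1 b2 =>
      simp only [Algebra.TensorProduct.tmul_mul_tmul, TensorProduct.map_tmul,
        LinearMap.mul'_apply, LinearMap.id_coe, id_eq, convG2_tmul, hSmul]
      simp [mul_assoc]
    | add y1 y2 h1 h2 =>
      simp only [mul_add, map_add, LinearMap.add_apply, h1, h2]
  | add x1 x2 h1 h2 =>
    simp only [add_mul, map_add, LinearMap.add_apply, h1, h2]

lemma convG2_one (S : A →ₗ[ℂ] A) (x : A ⊗[ℂ] A) :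
    convG2 S x 1 = (LinearMap.mul' ℂ A) ((TensorProduct.map LinearMap.id S) x) := by
  induction x using TensorProduct.induction_on with
  | zero => simp
  | tmul a1 a2 =>
    simp only [convG2_tmul, TensorProduct.map_tmul, LinearMap.mul'_apply, LinearMap.id_coe,
      id_eq, mul_one]
  | add y1 y2 h1 h2 => simp only [map_add, LinearMap.add_apply, h1, h2]

end ConvHelper


lemma tpmap_agree {A B C D : Type} [Semiring A] [Algebra ℂ A] [Semiring B] [Algebra ℂ B]
    [Semiring C] [Algebra ℂ C] [Semiring D] [Algebra ℂ D]
    (φ : A →ₐ[ℂ] B) (ψ : C →ₐ[ℂ] D) (x : A ⊗[ℂ] C) :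
    TensorProduct.map φ.toLinearMap ψ.toLinearMap x = Algebra.TensorProduct.map φ ψ x := by
  induction x using TensorProduct.induction_on with
  | zero => simp
  | tmul a c => simp
  | add a b ha hb => simp [map_add, ha, hb]

lemma assoc_agree {A : Type} [Semiring A] [Algebra ℂ A] (x : (A ⊗[ℂ] A) ⊗[ℂ] A) :
    (TensorProduct.assoc ℂ A A A) x = (Algebra.TensorProduct.assoc ℂ ℂ ℂ A A A) x := rfl

lemma lid_agree {A : Type} [Semiring A] [Algebra ℂ A] (x : ℂ ⊗[ℂ] A) :
    (TensorProduct.lid ℂ A) x = (Algebra.TensorProduct.lid ℂ A) x := rfl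

lemma rid_agree {A : Type} [Semiring A] [Algebra ℂ A] (x : A ⊗[ℂ] ℂ) :
    (TensorProduct.rid ℂ A) x = (Algebra.TensorProduct.rid ℂ ℂ A) x := by
  induction x using TensorProduct.induction_on with
  | zero => simp
  | tmul a c => simp [Algebra.TensorProduct.rid_tmul]
  | add a b ha hb => simp [map_add, ha, hb]

variable {N : ℕ} {R : Fin N → Fin N → Fin N → Fin N → ℂ}
  {g gt : Fin N → Fin N → ℂ} {f ft : Fin N → Fin N → Fin N → ℂ}

lemma argf_algHom_ext {B : Type} [Semiring B] [Algebra ℂ B]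
    {φ ψ : ARgf N R g gt f ft →ₐ[ℂ] B}
    (h : ∀ i j, φ (tgen N R g gt f ft i j) = ψ (tgen N R g gt f ft i j)) : φ = ψ := by
  apply RingQuot.ringQuot_ext'
  apply FreeAlgebra.hom_ext
  funext p
  simpa only [Function.comp_apply, AlgHom.coe_comp, tgen] using h p.1 p.2

set_option maxHeartbeats 1000000 in
lemma big_aux (N : ℕ) (R : Fin N → Fin N → Fin N → Fin N → ℂ)
    (g gt : Fin N → Fin N → ℂ) (f ft : Fin N → Fin N → Fin N → ℂ)
    (hgs2 : ∀ i j : Fin N, ∑ k, g k i * gt k j = if i = j then (1 : ℂ) else 0) :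
    ∃ (Δ : ARgf N R g gt f ft →ₐ[ℂ] ARgf N R g gt f ft ⊗[ℂ] ARgf N R g gt f ft)
      (ε : ARgf N R g gt f ft →ₐ[ℂ] ℂ)
      (S : ARgf N R g gt f ft →ₗ[ℂ] ARgf N R g gt f ft),
      (∀ i j : Fin N, Δ (tgen N R g gt f ft i j)
          = ∑ k, tgen N R g gt f ft i k ⊗ₜ[ℂ] tgen N R g gt f ft k j)
      ∧ (∀ i j : Fin N, ε (tgen N R g gt f ft i j) = if i = j then (1 : ℂ) else 0)
      ∧ (∀ a b : ARgf N R g gt f ft, S (a * b) = S b * S a) ∧ S 1 = 1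
      ∧ (∀ i j : Fin N, S (tgen N R g gt f ft i j)
          = ∑ k, ∑ l, (g l i * gt k j) • tgen N R g gt f ft k l)
      ∧ (∀ a : ARgf N R g gt f ft,
          (TensorProduct.assoc ℂ (ARgf N R g gt f ft) (ARgf N R g gt f ft) (ARgf N R g gt f ft))
            ((TensorProduct.map Δ.toLinearMap LinearMap.id) (Δ a))
          = (TensorProduct.map LinearMap.id Δ.toLinearMap) (Δ a))
      ∧ (∀ a : ARgf N R g gt f ft, (TensorProduct.lid ℂ (ARgf N R g gt f ft))
            ((TensorProduct.map ε.toLinearMap LinearMap.id) (Δ a)) = a)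
      ∧ (∀ a : ARgf N R g gt f ft, (TensorProduct.rid ℂ (ARgf N R g gt f ft))
            ((TensorProduct.map LinearMap.id ε.toLinearMap) (Δ a)) = a)
      ∧ (∀ a : ARgf N R g gt f ft, (LinearMap.mul' ℂ (ARgf N R g gt f ft))
            ((TensorProduct.map S LinearMap.id) (Δ a))
          = algebraMap ℂ (ARgf N R g gt f ft) (ε a))
      ∧ (∀ a : ARgf N R g gt f ft, (LinearMap.mul' ℂ (ARgf N R g gt f ft))
            ((TensorProduct.map LinearMap.id S) (Δ a))
          = algebraMap ℂ (ARgf N R g gt f ft) (ε a)) := by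
  classical
  set A' := ARgf N R g gt f ft
  set t := tgen N R g gt f ft with ht
  set Δ : A' →ₐ[ℂ] A' ⊗[ℂ] A' := frtLift (frtSats_delta (R := R)) with hΔ
  set ε : A' →ₐ[ℂ] ℂ := frtLift (frtSats_eps (R := R) (g := g) (gt := gt) (f := f) (ft := ft))
    with hε
  set Sop : A' →ₐ[ℂ] A'ᵐᵒᵖ := frtLift (frtSats_op hgs2) with hSop
  set S : A' →ₗ[ℂ] A' :=
    ((MulOpposite.opLinearEquiv ℂ : A' ≃ₗ[ℂ] A'ᵐᵒᵖ).symm.toLinearMap).comp Sop.toLinearMap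
    with hS
  have hΔt : ∀ i j, Δ (t i j) = ∑ k, t i k ⊗ₜ[ℂ] t k j := fun i j => frtLift_tgen _ i j
  have hεt : ∀ i j, ε (t i j) = if i = j then (1 : ℂ) else 0 := fun i j => frtLift_tgen _ i j
  have hSt : ∀ i j, S (t i j) = sgen N R g gt f ft i j := by
    intro i j
    rw [hS]
    simp only [LinearMap.comp_apply, AlgHom.toLinearMap_apply, LinearEquiv.coe_toLinearMap]
    rw [hSop]
    rw [frtLift_tgen (frtSats_op hgs2) i j]
    simp
  have hSalg : ∀ c : ℂ, S (algebraMap ℂ A' c) = algebraMap ℂ A' c := by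
    intro c
    rw [hS]
    simp only [LinearMap.comp_apply, AlgHom.toLinearMap_apply, LinearEquiv.coe_toLinearMap,
      AlgHom.commutes, MulOpposite.algebraMap_apply]
    simp
  have hSmul : ∀ a b : A', S (a * b) = S b * S a := by
    intro a b
    rw [hS]
    simp only [LinearMap.comp_apply, AlgHom.toLinearMap_apply, LinearEquiv.coe_toLinearMap,
      map_mul]
    rfl
  have hS1 : S 1 = 1 := by
    rw [hS]
    simp only [LinearMap.comp_apply, AlgHom.toLinearMap_apply, LinearEquiv.coe_toLinearMap,
      map_one]
    rfl
  refine ⟨Δ, ε, S, hΔt, hεt, hSmul, hS1, fun i j => hSt i j, ?_, ?_, ?_, ?_, ?_⟩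
  · -- coassociativity
    have halg : (Algebra.TensorProduct.assoc ℂ ℂ ℂ A' A' A').toAlgHom.comp
        ((Algebra.TensorProduct.map Δ (AlgHom.id ℂ A')).comp Δ)
        = (Algebra.TensorProduct.map (AlgHom.id ℂ A') Δ).comp Δ := by
      apply argf_algHom_ext
      intro i j
      simp only [← ht, AlgHom.coe_comp, Function.comp_apply, AlgEquiv.toAlgHom_eq_coe,
        AlgEquiv.coe_toAlgHom,
        AlgHom.coe_coe, hΔt, map_sum, Algebra.TensorProduct.map_tmul, AlgHom.coe_id, id_eq,
        TensorProduct.sum_tmul, TensorProduct.tmul_sum, Algebra.TensorProduct.assoc_tmul]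
      rw [Finset.sum_comm]
    intro a
    have h := AlgHom.congr_fun halg a
    simp only [AlgHom.coe_comp, Function.comp_apply, AlgEquiv.toAlgHom_eq_coe,
      AlgHom.coe_coe] at h
    calc (TensorProduct.assoc ℂ A' A' A') ((TensorProduct.map Δ.toLinearMap LinearMap.id) (Δ a))
        = (Algebra.TensorProduct.assoc ℂ ℂ ℂ A' A' A')
            ((Algebra.TensorProduct.map Δ (AlgHom.id ℂ A')) (Δ a)) := by
          rw [← AlgHom.toLinearMap_id (R := ℂ) (A := A'), tpmap_agree, assoc_agree]
      _ = (Algebra.TensorProduct.map (AlgHom.id ℂ A') Δ) (Δ a) := h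
      _ = (TensorProduct.map LinearMap.id Δ.toLinearMap) (Δ a) := by
          rw [← AlgHom.toLinearMap_id (R := ℂ) (A := A'), tpmap_agree]
  · -- left counit
    have halg : (Algebra.TensorProduct.lid ℂ A').toAlgHom.comp
        ((Algebra.TensorProduct.map ε (AlgHom.id ℂ A')).comp Δ) = AlgHom.id ℂ A' := by
      apply argf_algHom_ext
      intro i j
      simp only [← ht, AlgHom.coe_comp, Function.comp_apply, AlgEquiv.toAlgHom_eq_coe,
        AlgEquiv.coe_toAlgHom,
        AlgHom.coe_coe, hΔt, map_sum, Algebra.TensorProduct.map_tmul, AlgHom.coe_id, id_eq,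
        hεt, Algebra.TensorProduct.lid_tmul, ite_smul, one_smul, zero_smul,
        Finset.sum_ite_eq, Finset.mem_univ, if_true]
      rfl
    intro a
    have h := AlgHom.congr_fun halg a
    simp only [AlgHom.coe_comp, Function.comp_apply, AlgEquiv.toAlgHom_eq_coe,
      AlgHom.coe_coe, AlgHom.coe_id, id_eq] at h
    calc (TensorProduct.lid ℂ A') ((TensorProduct.map ε.toLinearMap LinearMap.id) (Δ a))
        = (Algebra.TensorProduct.lid ℂ A')
            ((Algebra.TensorProduct.map ε (AlgHom.id ℂ A')) (Δ a)) := by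
          rw [← AlgHom.toLinearMap_id (R := ℂ) (A := A'), tpmap_agree, lid_agree]
      _ = a := h
  · -- right counit
    have halg : (Algebra.TensorProduct.rid ℂ ℂ A').toAlgHom.comp
        ((Algebra.TensorProduct.map (AlgHom.id ℂ A') ε).comp Δ) = AlgHom.id ℂ A' := by
      apply argf_algHom_ext
      intro i j
      simp only [← ht, AlgHom.coe_comp, Function.comp_apply, AlgEquiv.toAlgHom_eq_coe,
        AlgEquiv.coe_toAlgHom,
        AlgHom.coe_coe, hΔt, map_sum, Algebra.TensorProduct.map_tmul, AlgHom.coe_id, id_eq,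
        hεt, Algebra.TensorProduct.rid_tmul, ite_smul, one_smul, zero_smul,
        Finset.sum_ite_eq', Finset.mem_univ, if_true]
      rfl
    intro a
    have h := AlgHom.congr_fun halg a
    simp only [AlgHom.coe_comp, Function.comp_apply, AlgEquiv.toAlgHom_eq_coe,
      AlgHom.coe_coe, AlgHom.coe_id, id_eq] at h
    calc (TensorProduct.rid ℂ A') ((TensorProduct.map LinearMap.id ε.toLinearMap) (Δ a))
        = (Algebra.TensorProduct.rid ℂ ℂ A')
            ((Algebra.TensorProduct.map (AlgHom.id ℂ A') ε) (Δ a)) := by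
          rw [← AlgHom.toLinearMap_id (R := ℂ) (A := A'), tpmap_agree, rid_agree]
      _ = a := h
  · -- left antipode law
    intro a
    obtain ⟨x, rfl⟩ := RingQuot.mkAlgHom_surjective ℂ (ARgfRel N R g gt f ft) a
    induction x using FreeAlgebra.induction with
    | grade0 r =>
      rw [AlgHom.commutes (RingQuot.mkAlgHom ℂ (ARgfRel N R g gt f ft)) r]
      rw [AlgHom.commutes Δ r, AlgHom.commutes ε r, Algebra.TensorProduct.algebraMap_apply]
      simp only [TensorProduct.map_tmul, LinearMap.id_coe, id_eq, LinearMap.mul'_apply,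
        hSalg, mul_one]
      simp
      rfl
    | grade1 p =>
      have hmk : (RingQuot.mkAlgHom ℂ (ARgfRel N R g gt f ft)) (FreeAlgebra.ι ℂ p)
          = t p.1 p.2 := by rw [ht, tgen]
      rw [hmk, hΔt, map_sum, map_sum]
      simp only [TensorProduct.map_tmul, LinearMap.id_coe, id_eq, LinearMap.mul'_apply, hSt]
      rw [sgen_mul_tgen hgs2 p.1 p.2, hεt]
      rw [apply_ite (algebraMap ℂ A'), map_one, map_zero]
    | mul x y hx hy =>
      rw [map_mul, map_mul, convG_mul S hSmul, hx, Algebra.algebraMap_eq_smul_one, map_smul,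
        convG_one, hy, map_mul]
      rw [Algebra.smul_def, ← map_mul]
    | add x y hx hy =>
      simp only [map_add, hx, hy]
  · -- right antipode law
    intro a
    obtain ⟨x, rfl⟩ := RingQuot.mkAlgHom_surjective ℂ (ARgfRel N R g gt f ft) a
    induction x using FreeAlgebra.induction with
    | grade0 r =>
      rw [AlgHom.commutes (RingQuot.mkAlgHom ℂ (ARgfRel N R g gt f ft)) r]
      rw [AlgHom.commutes Δ r, AlgHom.commutes ε r, Algebra.TensorProduct.algebraMap_apply]
      simp only [TensorProduct.map_tmul, LinearMap.id_coe, id_eq, LinearMap.mul'_apply,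
        hS1, mul_one]
      simp
      rfl
    | grade1 p =>
      have hmk : (RingQuot.mkAlgHom ℂ (ARgfRel N R g gt f ft)) (FreeAlgebra.ι ℂ p)
          = t p.1 p.2 := by rw [ht, tgen]
      rw [hmk, hΔt, map_sum, map_sum]
      simp only [TensorProduct.map_tmul, LinearMap.id_coe, id_eq, LinearMap.mul'_apply, hSt]
      rw [tgen_mul_sgen hgs2 p.1 p.2, hεt]
      rw [apply_ite (algebraMap ℂ A'), map_one, map_zero]
    | mul x y hx hy =>
      rw [map_mul, map_mul, convG2_mul S hSmul, hy, Algebra.algebraMap_eq_smul_one, map_smul,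
        convG2_one, hx, map_mul]
      rw [Algebra.smul_def, ← map_mul, mul_comm (ε _) (ε _)]
    | add x y hx hy =>
      simp only [map_add, hx, hy]

end P5

/-- under the conditions (gs), (fs) and (rg) on the structure constants, the
algebra `A_{Rgf}` admits a Hopf algebra structure with `Δ(t^i_j) = t^i_k ⊗ t^k_j`,
`ε(t^i_j) = δ^i_j` and `S(t^i_j) = g^{li} t^k_l g̃_{kj}`. -/
theorem stmt13 (N : ℕ) (hN : 1 ≤ N)
    (R : Fin N → Fin N → Fin N → Fin N → ℂ) (g gt : Fin N → Fin N → ℂ)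
    (f ft : Fin N → Fin N → Fin N → ℂ)
    (hgs : ∀ i j : Fin N, (∑ k, g i k * gt j k = if i = j then (1 : ℂ) else 0)
      ∧ (∑ k, g k i * gt k j = if i = j then (1 : ℂ) else 0))
    (hfs : ∀ i j k : Fin N,
      (∑ n, ∑ l, ∑ m', g n i * f l m' n * gt l j * gt m' k = ft i j k)
      ∧ (∑ n, ∑ l, ∑ m', g i n * f l m' n * gt j l * gt k m' = ft i j k))
    (hrg : ∀ i j m' n : Fin N,
      ∑ k, ∑ l, R i j k l * g k m' * g l n = ∑ k, ∑ l, g j l * g i k * R k l m' n)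
 :
    letI A := ARgf N R g gt f ft
    letI t := tgen N R g gt f ft
    ∃ (Δ : A →ₐ[ℂ] A ⊗[ℂ] A) (ε : A →ₐ[ℂ] ℂ) (S : A →ₗ[ℂ] A),
      (∀ i j : Fin N, Δ (t i j) = ∑ k, t i k ⊗ₜ[ℂ] t k j)
      ∧ (∀ i j : Fin N, ε (t i j) = if i = j then (1 : ℂ) else 0)
      ∧ (∀ a b : A, S (a * b) = S b * S a) ∧ S 1 = 1
      ∧ (∀ i j : Fin N, S (t i j) = ∑ k, ∑ l, (g l i * gt k j) • t k l)
      ∧ (∀ a : A, (TensorProduct.assoc ℂ A A A)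
            ((TensorProduct.map Δ.toLinearMap LinearMap.id) (Δ a))
          = (TensorProduct.map LinearMap.id Δ.toLinearMap) (Δ a))
      ∧ (∀ a : A, (TensorProduct.lid ℂ A)
            ((TensorProduct.map ε.toLinearMap LinearMap.id) (Δ a)) = a)
      ∧ (∀ a : A, (TensorProduct.rid ℂ A)
            ((TensorProduct.map LinearMap.id ε.toLinearMap) (Δ a)) = a)
      ∧ (∀ a : A, (LinearMap.mul' ℂ A) ((TensorProduct.map S LinearMap.id) (Δ a))
          = algebraMap ℂ A (ε a))
      ∧ (∀ a : A, (LinearMap.mul' ℂ A) ((TensorProduct.map LinearMap.id S) (Δ a))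
          = algebraMap ℂ A (ε a)) := by
  exact big_aux N R g gt f ft (fun i j => (hgs i j).2)
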